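/- Let m be a nonnegative integer and let (φ_k) be a tuple of complex polynomial functions indexed by the integers k with |k| ≤ m, k ≡ m (mod 2), satisfying φ_k(λ) = φ_{−k}(−λ) for all k, λ and φ_k(l) = φ_l(k) for all indices k, l. Then there exists a polynomial P ∈ ℂ[X, Y] in two variables such that φ_k(λ) = P(λ² + k², kλ) for all indices k and all λ ∈ ℂ. (In other words, the two elements (λ, k) ↦ λ² + k² and (λ, k) ↦ kλ generate the algebra ₘPol_m as a ℂ-algebra.) -/

import Mathlib

open Polynomial

lemma aux_eval_aeval (P : MvPolynomial (Fin 2) ℂ) (v : Fin 2 → Polynomial ℂ) (z : ℂ) :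
    (MvPolynomial.aeval v P : Polynomial ℂ).eval z
      = MvPolynomial.eval (fun i => (v i).eval z) P := by
  induction P using MvPolynomial.induction_on with
  | C a => simp
  | add p q hp hq => simp [hp, hq]
  | mul_X p i hp => simp [hp]

lemma aux_dvd (rs : List ℂ) (hrs : rs.Pairwise (· ≠ ·)) :
    ∀ p : Polynomial ℂ, (∀ r ∈ rs, p.eval r = 0) →
      (rs.map (fun r => X - C r)).prod ∣ p := by
  induction rs with
  | nil => intro p _; simp
  | cons r t ih =>
    intro p hp
    have hr : (X - C r) ∣ p := dvd_iff_isRoot.mpr (hp r (by simp))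
    obtain ⟨q, hq⟩ := hr
    have ht : ∀ r' ∈ t, q.eval r' = 0 := by
      intro r' hr'
      have h0 : p.eval r' = 0 := hp r' (by simp [hr'])
      rw [hq] at h0
      simp only [eval_mul, eval_sub, eval_X, eval_C] at h0
      have hne : r' - r ≠ 0 := sub_ne_zero.mpr fun h => (List.pairwise_cons.mp hrs).1 r' hr' h.symm
      exact (mul_eq_zero.mp h0).resolve_left hne
    obtain ⟨s, hs⟩ := ih (List.pairwise_cons.mp hrs).2 q ht
    exact ⟨s, by rw [hq, hs, List.map_cons, List.prod_cons]; ring⟩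

lemma aux_lift (c : ℕ) (g : Polynomial ℂ) (hev : c = 0 → ∀ z : ℂ, g.eval (-z) = g.eval z) :
    ∃ Q : MvPolynomial (Fin 2) ℂ, ∀ z : ℂ,
      MvPolynomial.eval ![z ^ 2 + (c : ℂ) ^ 2, (c : ℂ) * z] Q = g.eval z := by
  classical
  refine ⟨∑ n ∈ Finset.range (g.natDegree + 1), MvPolynomial.C (g.coeff n) *
      (MvPolynomial.X 0 - MvPolynomial.C ((c : ℂ) ^ 2)) ^ (n / 2) *
      (if Even n then 1 else MvPolynomial.C ((c : ℂ))⁻¹ * MvPolynomial.X 1), fun z => ?_⟩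
  rw [map_sum]
  have hterm : ∀ n, MvPolynomial.eval ![z ^ 2 + (c : ℂ) ^ 2, (c : ℂ) * z]
      (MvPolynomial.C (g.coeff n) *
        (MvPolynomial.X 0 - MvPolynomial.C ((c : ℂ) ^ 2)) ^ (n / 2) *
        (if Even n then 1 else MvPolynomial.C ((c : ℂ))⁻¹ * MvPolynomial.X 1))
      = g.coeff n * (z ^ 2) ^ (n / 2) *
        (if Even n then 1 else (c : ℂ)⁻¹ * ((c : ℂ) * z)) := by
    intro n
    by_cases hn : Even n <;> simp [hn]
  by_cases hc : (c : ℂ) = 0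
  · have hc0 : c = 0 := by exact_mod_cast hc
    have hsum : ∀ n ∈ Finset.range (g.natDegree + 1),
        MvPolynomial.eval ![z ^ 2 + (c : ℂ) ^ 2, (c : ℂ) * z]
        (MvPolynomial.C (g.coeff n) *
          (MvPolynomial.X 0 - MvPolynomial.C ((c : ℂ) ^ 2)) ^ (n / 2) *
          (if Even n then 1 else MvPolynomial.C ((c : ℂ))⁻¹ * MvPolynomial.X 1))
        = (g.coeff n * z ^ n + g.coeff n * (-z) ^ n) / 2 := by
      intro n _
      rw [hterm n]
      rcases Nat.even_or_odd n with he | ho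
      · obtain ⟨a, ha⟩ := he
        have : n / 2 = a := by omega
        rw [if_pos ⟨a, ha⟩, this, Even.neg_pow ⟨a, ha⟩, ← pow_mul]
        have : 2 * a = n := by omega
        rw [this]; ring
      · rw [if_neg (Nat.not_even_iff_odd.mpr ho), Odd.neg_pow ho, hc]
        ring
    rw [Finset.sum_congr rfl hsum, ← Finset.sum_div, Finset.sum_add_distrib]
    have e1 : g.eval z = ∑ n ∈ Finset.range (g.natDegree + 1), g.coeff n * z ^ n :=
      eval_eq_sum_range z
    have e2 : g.eval (-z) = ∑ n ∈ Finset.range (g.natDegree + 1), g.coeff n * (-z) ^ n :=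
      eval_eq_sum_range (-z)
    rw [← e1, ← e2, hev hc0 z]
    ring
  · have hsum : ∀ n ∈ Finset.range (g.natDegree + 1),
        MvPolynomial.eval ![z ^ 2 + (c : ℂ) ^ 2, (c : ℂ) * z]
        (MvPolynomial.C (g.coeff n) *
          (MvPolynomial.X 0 - MvPolynomial.C ((c : ℂ) ^ 2)) ^ (n / 2) *
          (if Even n then 1 else MvPolynomial.C ((c : ℂ))⁻¹ * MvPolynomial.X 1))
        = g.coeff n * z ^ n := by
      intro n _
      rw [hterm n]
      rcases Nat.even_or_odd n with he | ho
      · obtain ⟨a, ha⟩ := id he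
        have h2 : n / 2 = a := by omega
        rw [if_pos he, h2, ← pow_mul]
        have : 2 * a = n := by omega
        rw [this]; ring
      · obtain ⟨a, ha⟩ := id ho
        have h2 : n / 2 = a := by omega
        rw [if_neg (Nat.not_even_iff_odd.mpr ho), h2, ← pow_mul, inv_mul_cancel_left₀ hc]
        have : z ^ (2 * a) * z = z ^ n := by rw [ha]; ring
        rw [mul_assoc, this]
    rw [Finset.sum_congr rfl hsum]
    exact (eval_eq_sum_range z).symm

lemma vec2_eq {a b a' b' : ℂ} (h1 : a = a') (h2 : b = b') :
    (![a, b] : Fin 2 → ℂ) = ![a', b'] := by rw [h1, h2]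

lemma aux_main (f : ℕ → Polynomial ℂ) :
    ∀ L : List ℕ, L.Pairwise (· < ·) →
    (∀ c ∈ L, ∀ k ∈ L, (f c).eval ((k : ℂ)) = (f k).eval ((c : ℂ))) →
    (∀ c ∈ L, ∀ k ∈ L, (f c).eval (-(k : ℂ)) = (f k).eval (-(c : ℂ))) →
    (0 ∈ L → ∀ z : ℂ, (f 0).eval (-z) = (f 0).eval z) →
    ∃ P : MvPolynomial (Fin 2) ℂ, ∀ c ∈ L, ∀ z : ℂ,
      (f c).eval z = MvPolynomial.eval ![z ^ 2 + (c : ℂ) ^ 2, (c : ℂ) * z] P := by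
  intro L
  induction L with
  | nil => intro _ _ _ _; exact ⟨0, by simp⟩
  | cons c t ih =>
    intro hsort H1 H2 H3
    have hct : ∀ k ∈ t, c < k := fun k hk => (List.pairwise_cons.mp hsort).1 k hk
    obtain ⟨P', hP'⟩ := ih (List.pairwise_cons.mp hsort).2
      (fun a ha b hb => H1 a (by simp [ha]) b (by simp [hb]))
      (fun a ha b hb => H2 a (by simp [ha]) b (by simp [hb]))
      (fun h0 => H3 (by simp [h0]))
    -- the restriction of P' to the curve of parameter c, as a one-variable polynomial
    set v : Fin 2 → Polynomial ℂ := ![X ^ 2 + C ((c : ℂ) ^ 2), C (c : ℂ) * X] with hv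
    set A : Polynomial ℂ := MvPolynomial.aeval v P' with hAdef
    have hA : ∀ z : ℂ, A.eval z = MvPolynomial.eval ![z ^ 2 + (c : ℂ) ^ 2, (c : ℂ) * z] P' := by
      intro z
      rw [hAdef, aux_eval_aeval]
      have hfun : (fun i => Polynomial.eval z (v i)) = ![z ^ 2 + (c : ℂ) ^ 2, (c : ℂ) * z] := by
        funext i; fin_cases i <;> simp [hv]
      rw [hfun]
    set D : Polynomial ℂ := f c - A with hDdef
    set rs : List ℂ := t.map (fun k : ℕ => (k : ℂ)) ++ t.map (fun k : ℕ => -(k : ℂ)) with hrs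
    have hinj : Function.Injective (fun k : ℕ => (k : ℂ)) := Nat.cast_injective
    have htpos : ∀ k ∈ t, 0 < k := fun k hk => Nat.lt_of_le_of_lt (Nat.zero_le c) (hct k hk)
    have htne : t.Pairwise (· ≠ ·) :=
      (List.pairwise_cons.mp hsort).2.imp Nat.ne_of_lt
    have hrsne : rs.Pairwise (· ≠ ·) := by
      rw [hrs, List.pairwise_append]
      refine ⟨?_, ?_, ?_⟩
      · rw [List.pairwise_map]
        refine htne.imp ?_
        intro a b hab he
        exact hab (hinj he)
      · rw [List.pairwise_map]
        refine htne.imp ?_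
        intro a b hab he
        exact hab (hinj (neg_injective he))
      intro x hx y hy
      obtain ⟨a, ha, rfl⟩ := List.mem_map.mp hx
      obtain ⟨b, hb, rfl⟩ := List.mem_map.mp hy
      intro he
      have hab : ((a + b : ℕ) : ℂ) = ((0 : ℕ) : ℂ) := by push_cast; linear_combination he
      have h4 := Nat.cast_injective (R := ℂ) hab
      have h5 := htpos a ha
      omega
    -- D vanishes on rs
    have hDroots : ∀ r ∈ rs, D.eval r = 0 := by
      intro r hr
      rw [hrs, List.mem_append] at hr
      rcases hr with hr | hr
      · obtain ⟨k, hk, rfl⟩ := List.mem_map.mp hr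
        have h1 : A.eval (k : ℂ) = (f k).eval (c : ℂ) := by
          rw [hA, hP' k hk (c : ℂ),
            show (![(k : ℂ) ^ 2 + (c : ℂ) ^ 2, (c : ℂ) * (k : ℂ)] : Fin 2 → ℂ)
              = ![(c : ℂ) ^ 2 + (k : ℂ) ^ 2, (k : ℂ) * (c : ℂ)] from
              vec2_eq (by ring) (by ring)]
        simp only [hDdef, eval_sub, h1]
        rw [H1 c (by simp) k (by simp [hk])]
        ring
      · obtain ⟨k, hk, rfl⟩ := List.mem_map.mp hr
        have h1 : A.eval (-(k : ℂ)) = (f k).eval (-(c : ℂ)) := by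
          rw [hA, hP' k hk (-(c : ℂ)),
            show (![(-(k : ℂ)) ^ 2 + (c : ℂ) ^ 2, (c : ℂ) * (-(k : ℂ))] : Fin 2 → ℂ)
              = ![(-(c : ℂ)) ^ 2 + (k : ℂ) ^ 2, (k : ℂ) * (-(c : ℂ))] from
              vec2_eq (by ring) (by ring)]
        simp only [hDdef, eval_sub, h1]
        rw [H2 c (by simp) k (by simp [hk])]
        ring
    set Mp : Polynomial ℂ := (rs.map (fun r => X - C r)).prod with hMpdef
    obtain ⟨G, hG⟩ := aux_dvd rs hrsne D hDroots
    have hMpeval : ∀ z : ℂ, Mp.eval z = (t.map (fun k : ℕ => z ^ 2 - (k : ℂ) ^ 2)).prod := by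
      intro z
      rw [hMpdef, eval_list_prod, List.map_map, hrs, List.map_append, List.prod_append,
        List.map_map, List.map_map]
      rw [← List.prod_map_mul]
      congr 1
      apply List.map_congr_left
      intro k hk
      simp [Function.comp]
      ring
    have hMpne : Mp ≠ 0 := by
      rw [hMpdef]
      apply List.prod_ne_zero
      intro h0
      obtain ⟨r, _, hr⟩ := List.mem_map.mp h0
      exact X_sub_C_ne_zero r hr
    -- evenness of G when c = 0
    have hGev : c = 0 → ∀ z : ℂ, G.eval (-z) = G.eval z := by
      intro hc0 z
      have hDev : ∀ w : ℂ, D.eval (-w) = D.eval w := by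
        intro w
        have hfc : (f c).eval (-w) = (f c).eval w := by
          rw [hc0]; exact H3 (by simp [hc0]) w
        have hAe : A.eval (-w) = A.eval w := by
          rw [hA, hA,
            show (![(-w) ^ 2 + (c : ℂ) ^ 2, (c : ℂ) * (-w)] : Fin 2 → ℂ)
              = ![w ^ 2 + (c : ℂ) ^ 2, (c : ℂ) * w] from
              vec2_eq (by ring) (by rw [hc0]; push_cast; ring)]
        simp [hDdef, hfc, hAe]
      have hMev : ∀ w : ℂ, Mp.eval (-w) = Mp.eval w := by
        intro w
        rw [hMpeval, hMpeval]
        congr 1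
        apply List.map_congr_left
        intro k hk
        ring
      have key : (G.comp (-X) - G) * Mp = 0 := by
        apply Polynomial.funext
        intro w
        have h1 := hDev w
        rw [hG] at h1
        simp only [eval_mul] at h1
        rw [hMev w] at h1
        simp only [eval_mul, eval_sub, eval_comp, eval_neg, eval_X, eval_zero]
        rw [sub_mul]
        rw [mul_comm (Mp.eval w) (G.eval (-w)), mul_comm (Mp.eval w) (G.eval w)] at h1
        rw [h1]; ring
      have : G.comp (-X) - G = 0 := by
        rcases mul_eq_zero.mp key with h | h
        · exact h
        · exact absurd h hMpne
      have hGc : G.comp (-X) = G := sub_eq_zero.mp this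
      calc G.eval (-z) = (G.comp (-X)).eval z := by rw [eval_comp]; simp
        _ = G.eval z := by rw [hGc]
    -- the constant K
    set K : ℂ := (t.map (fun k : ℕ => (c : ℂ) ^ 2 - (k : ℂ) ^ 2)).prod with hKdef
    have hKne : K ≠ 0 := by
      rw [hKdef]
      apply List.prod_ne_zero
      intro h0
      obtain ⟨k, hk, hk2⟩ := List.mem_map.mp h0
      have : (c : ℂ) ^ 2 = (k : ℂ) ^ 2 := by linear_combination hk2
      have : ((c ^ 2 : ℕ) : ℂ) = ((k ^ 2 : ℕ) : ℂ) := by push_cast; exact this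
      have := hinj this
      have := hct k hk
      nlinarith [this]
    obtain ⟨Q, hQ⟩ := aux_lift c (C K⁻¹ * G) (by
      intro hc0 z
      simp only [eval_mul, eval_C]
      rw [hGev hc0 z])
    set q : ℕ → MvPolynomial (Fin 2) ℂ := fun k =>
      (MvPolynomial.X 1) ^ 2 - MvPolynomial.C ((k : ℂ) ^ 2) * MvPolynomial.X 0
        + MvPolynomial.C ((k : ℂ) ^ 4) with hqdef
    set Qprod : MvPolynomial (Fin 2) ℂ := (t.map q).prod with hQproddef
    have hqeval : ∀ (k : ℕ) (b z : ℂ),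
        MvPolynomial.eval ![z ^ 2 + b ^ 2, b * z] (q k)
          = (b ^ 2 - (k : ℂ) ^ 2) * (z ^ 2 - (k : ℂ) ^ 2) := by
      intro k b z
      simp [hqdef]
      ring
    have hQprodc : ∀ z : ℂ,
        MvPolynomial.eval ![z ^ 2 + (c : ℂ) ^ 2, (c : ℂ) * z] Qprod = K * Mp.eval z := by
      intro z
      rw [hQproddef, ← List.prod_hom _ (MvPolynomial.eval ![z ^ 2 + (c : ℂ) ^ 2, (c : ℂ) * z]),
        List.map_map]
      rw [hMpeval z, hKdef, ← List.prod_map_mul]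
      congr 1
      apply List.map_congr_left
      intro k hk
      simp only [Function.comp_apply]
      exact hqeval k (c : ℂ) z
    have hQprodt : ∀ k ∈ t, ∀ z : ℂ,
        MvPolynomial.eval ![z ^ 2 + (k : ℂ) ^ 2, (k : ℂ) * z] Qprod = 0 := by
      intro k hk z
      rw [hQproddef, ← List.prod_hom _ (MvPolynomial.eval ![z ^ 2 + (k : ℂ) ^ 2, (k : ℂ) * z]),
        List.map_map]
      apply List.prod_eq_zero
      rw [List.mem_map]
      exact ⟨k, hk, by simp [Function.comp, hqeval]⟩
    refine ⟨P' + Q * Qprod, ?_⟩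
    intro a ha z
    rcases List.mem_cons.mp ha with rfl | hat
    · rw [map_add, map_mul, hQ z, hQprodc z, ← hA z]
      have hDz : D.eval z = Mp.eval z * G.eval z := by rw [hG, eval_mul, hMpdef]
      have : (f a).eval z = A.eval z + D.eval z := by simp [hDdef]
      rw [this, hDz]
      simp only [eval_mul, eval_C]
      field_simp
    · rw [map_add, map_mul, hQprodt a hat z, ← hP' a hat z]
      ring

/-- the two elements `(λ,k) ↦ λ² + k²` and `(λ,k) ↦ kλ` generate the
algebra `ₘPol_m` as a `ℂ`-algebra: every symmetric tuple `(φ_k)` of polynomial functions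
(indexed by the integers `k` with `|k| ≤ m`, `k ≡ m (mod 2)`) satisfying
`φ_k(λ) = φ_{-k}(-λ)` and `φ_k(l) = φ_l(k)` is of the form
`φ_k(λ) = P(λ² + k², kλ)` for a single two-variable polynomial `P ∈ ℂ[X,Y]`. -/
theorem stmt_11 (m : ℕ) (φ : ℤ → ℂ → ℂ)
    (hpoly : ∀ k : ℤ, k.natAbs ≤ m → k % 2 = (m : ℤ) % 2 →
      ∃ p : Polynomial ℂ, ∀ z : ℂ, φ k z = p.eval z)
    (hsym : ∀ k : ℤ, k.natAbs ≤ m → k % 2 = (m : ℤ) % 2 → ∀ z : ℂ, φ k z = φ (-k) (-z))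
    (hint : ∀ k l : ℤ, k.natAbs ≤ m → l.natAbs ≤ m →
      k % 2 = (m : ℤ) % 2 → l % 2 = (m : ℤ) % 2 → φ k (l : ℂ) = φ l (k : ℂ)) :
    ∃ P : MvPolynomial (Fin 2) ℂ,
      ∀ k : ℤ, k.natAbs ≤ m → k % 2 = (m : ℤ) % 2 → ∀ z : ℂ,
        φ k z = MvPolynomial.eval ![z ^ 2 + (k : ℂ) ^ 2, (k : ℂ) * z] P := by
  classical
  set pf : ℕ → Polynomial ℂ := fun c =>
    if h : c ≤ m ∧ ((c : ℤ)) % 2 = (m : ℤ) % 2 then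
      Classical.choose (hpoly (c : ℤ) (by simpa using h.1) h.2)
    else 0 with hpf
  have hspec : ∀ c : ℕ, ∀ h : c ≤ m ∧ ((c : ℤ)) % 2 = (m : ℤ) % 2,
      ∀ z : ℂ, φ (c : ℤ) z = (pf c).eval z := by
    intro c h z
    rw [hpf]
    simp only [dif_pos h]
    exact Classical.choose_spec (hpoly (c : ℤ) (by simpa using h.1) h.2) z
  set L : List ℕ := (List.range (m + 1)).filter
    (fun c => decide (((c : ℤ)) % 2 = (m : ℤ) % 2)) with hL
  have hmem : ∀ c : ℕ, c ∈ L ↔ (c ≤ m ∧ ((c : ℤ)) % 2 = (m : ℤ) % 2) := by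
    intro c
    rw [hL, List.mem_filter, List.mem_range, decide_eq_true_iff]
    omega
  have hLs : L.Pairwise (· < ·) := (List.pairwise_lt_range (n := m + 1)).filter _
  -- negative index parities
  have hneg : ∀ c : ℕ, c ≤ m → ((c : ℤ)) % 2 = (m : ℤ) % 2 →
      ((-(c : ℤ)).natAbs ≤ m ∧ (-(c : ℤ)) % 2 = (m : ℤ) % 2) := by
    intro c h1 h2
    constructor
    · simpa using h1
    · rw [Int.neg_emod_two]; exact h2
  have H1 : ∀ c ∈ L, ∀ k ∈ L, (pf c).eval ((k : ℂ)) = (pf k).eval ((c : ℂ)) := by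
    intro c hc k hk
    rw [hmem] at hc hk
    have e1 := hspec c hc ((k : ℕ) : ℂ)
    have e2 := hspec k hk ((c : ℕ) : ℂ)
    rw [← e1, ← e2]
    have := hint (c : ℤ) (k : ℤ) (by simpa using hc.1) (by simpa using hk.1) hc.2 hk.2
    push_cast at this ⊢
    exact this
  have H2 : ∀ c ∈ L, ∀ k ∈ L, (pf c).eval (-(k : ℂ)) = (pf k).eval (-(c : ℂ)) := by
    intro c hc k hk
    rw [hmem] at hc hk
    have e1 := hspec c hc (-((k : ℕ) : ℂ))
    have e2 := hspec k hk (-((c : ℕ) : ℂ))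
    rw [← e1, ← e2]
    have s1 := hsym (c : ℤ) (by simpa using hc.1) hc.2 (-((k : ℕ) : ℂ))
    have s2 := hint (-(c : ℤ)) (k : ℤ) (hneg c hc.1 hc.2).1 (by simpa using hk.1)
      (hneg c hc.1 hc.2).2 hk.2
    rw [s1]
    simp only [neg_neg] at s1 ⊢
    have : φ (-(c : ℤ)) (((k : ℤ) : ℂ)) = φ (k : ℤ) (((-(c : ℤ) : ℤ)) : ℂ) := s2
    push_cast at this ⊢
    rw [this]
  have H3 : 0 ∈ L → ∀ z : ℂ, (pf 0).eval (-z) = (pf 0).eval z := by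
    intro h0 z
    rw [hmem] at h0
    have e1 := hspec 0 h0 (-z)
    have e2 := hspec 0 h0 z
    rw [← e1, ← e2]
    have := hsym 0 (by simpa using h0.1) h0.2 z
    simpa using this.symm
  obtain ⟨P, hP⟩ := aux_main pf L hLs H1 H2 H3
  refine ⟨P, ?_⟩
  intro k hk1 hk2 z
  set c : ℕ := k.natAbs with hc
  have hcL : c ∈ L := by
    rw [hmem]
    constructor
    · exact hk1
    · omega
  have hcm : c ≤ m ∧ ((c : ℤ)) % 2 = (m : ℤ) % 2 := (hmem c).mp hcL
  rcases Int.natAbs_eq k with hke | hke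
  · -- k = c
    have hkc : (k : ℂ) = ((c : ℕ) : ℂ) := by rw [hke]; exact Int.cast_natCast _
    rw [hkc, ← hP c hcL z]
    rw [show φ k z = φ (c : ℤ) z from by rw [hke]]
    exact hspec c hcm z
  · -- k = -c
    have hkc : (k : ℂ) = -((c : ℕ) : ℂ) := by rw [hke, Int.cast_neg, Int.cast_natCast]
    have hs := hsym k hk1 hk2 z
    have hnk : -k = (c : ℤ) := by omega
    rw [hs, hnk, hspec c hcm (-z), hP c hcL (-z),
      show (![(-z) ^ 2 + ((c : ℕ) : ℂ) ^ 2, ((c : ℕ) : ℂ) * (-z)] : Fin 2 → ℂ)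
        = ![z ^ 2 + (k : ℂ) ^ 2, (k : ℂ) * z] from
        vec2_eq (by rw [hkc]; ring) (by rw [hkc]; ring)]
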